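/- Under the q-deformed beta-binomial swap kernel with μ = ν_{n+1}/ν_n, ν = ν_{n+1} (where 0 < ν_{n+1} < ν_n < 1), the following summation identity holds for all integers x_{n+1} < x_n and nonnegative integers a, b: ∑_{x'=x_{n+1}+1}^{x_n} φ_{q, ν_{n+1}/ν_n, ν_{n+1}}(x'−x_{n+1}−1 | x_n−x_{n+1}−1) · q^{a(x_{n+1}+n+1)+b(x'+n)} = ∑_{r=0}^{b} φ_{q, ν_{n+1}/ν_n, ν_{n+1}}(r | b) · q^{(a+b−r)(x_{n+1}+n+1)+r(x_n+n)}. -/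

import Mathlib

open Finset

/-- The q-Pochhammer symbol `(x;q)_k = ∏_{i=0}^{k-1} (1 - q^i x)`. -/
noncomputable def qPoch (q x : ℝ) (k : ℕ) : ℝ := ∏ i ∈ Finset.range k, (1 - q ^ i * x)

/-- The q-deformed beta-binomial weight `φ_{q,μ,ν}(j|m)`. -/
noncomputable def qHahnPhi (q μ ν : ℝ) (j m : ℕ) : ℝ :=
  μ ^ j * (qPoch q (ν / μ) j * qPoch q μ (m - j)) / qPoch q ν m *
    (qPoch q q m / (qPoch q q j * qPoch q q (m - j)))

set_option linter.unusedSectionVars false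
set_option maxHeartbeats 1000000

lemma qPoch_zero (q x : ℝ) : qPoch q x 0 = 1 := by simp [qPoch]
lemma qPoch_succ (q x : ℝ) (k : ℕ) : qPoch q x (k+1) = qPoch q x k * (1 - q^k * x) := by
  simp [qPoch, Finset.prod_range_succ]
lemma qPoch_pos {q x : ℝ} (hq0 : 0 < q) (hq1 : q < 1) (hx0 : 0 ≤ x) (hx1 : x < 1) (k : ℕ) :
    0 < qPoch q x k := by
  refine Finset.prod_pos fun i _ => ?_
  have h1 : q ^ i ≤ 1 := pow_le_one₀ hq0.le hq1.le
  nlinarith [pow_pos hq0 i]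

noncomputable def qb (q : ℝ) (m j : ℕ) : ℝ :=
  if j ≤ m then qPoch q q m / (qPoch q q j * qPoch q q (m - j)) else 0

section
variable {q : ℝ} (hq0 : 0 < q) (hq1 : q < 1)
include hq0 hq1

lemma qq_ne (k : ℕ) : qPoch q q k ≠ 0 := (qPoch_pos hq0 hq1 hq0.le hq1 k).ne'

lemma qb_zero (m : ℕ) : qb q m 0 = 1 := by
  rw [qb, if_pos (Nat.zero_le m)]
  simp [qPoch_zero]
  exact qq_ne hq0 hq1 m

omit hq0 hq1 in
lemma qb_gt {m j : ℕ} (h : m < j) : qb q m j = 0 := by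
  rw [qb, if_neg (by omega)]

lemma qb_pascal (m j : ℕ) :
    qb q (m+1) (j+1) = q^(j+1) * qb q m (j+1) + qb q m j := by
  rcases lt_or_ge m j with h | h
  · rw [qb_gt (show m < j+1 by omega), qb_gt h, qb_gt (show m+1 < j+1 by omega)]
    ring
  · rcases eq_or_lt_of_le h with rfl | hlt
    · rw [qb_gt (show j < j+1 by omega), qb, if_pos le_rfl, qb, if_pos le_rfl]
      simp [qPoch_zero]
      rw [div_self (qq_ne hq0 hq1 (j+1)), div_self (qq_ne hq0 hq1 j)]
    · obtain ⟨e, rfl⟩ : ∃ e, m = j + 1 + e := ⟨m - (j+1), by omega⟩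
      rw [qb, if_pos (by omega), qb, if_pos (by omega), qb, if_pos (by omega)]
      rw [show j + 1 + e + 1 - (j + 1) = e + 1 from by omega,
          show j + 1 + e - (j + 1) = e from by omega,
          show j + 1 + e - j = e + 1 from by omega]
      rw [qPoch_succ q q (j+1+e), qPoch_succ q q j, qPoch_succ q q e]
      have h1 := qq_ne hq0 hq1 (j+1+e)
      have h2 := qq_ne hq0 hq1 (j+1)
      have h3 := qq_ne hq0 hq1 j
      have h4 := qq_ne hq0 hq1 e
      have h5 : (1 : ℝ) - q * q^j ≠ 0 := by
        intro hz; apply h2; rw [qPoch_succ, mul_comm (q^j) q, hz, mul_zero]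
      have h6 : (1 : ℝ) - q * q^e ≠ 0 := by
        intro hz; apply qq_ne hq0 hq1 (e+1); rw [qPoch_succ, mul_comm (q^e) q, hz, mul_zero]
      field_simp
      ring
end

noncomputable def G (q μ x : ℝ) (m b : ℕ) : ℝ :=
  ∑ j ∈ Finset.range (m+1), qb q m j * (μ * q^b)^j * qPoch q x j * qPoch q μ (m - j)

lemma G_zero (q μ x : ℝ) (b : ℕ) : G q μ x 0 b = 1 := by
  simp [G, qb, qPoch_zero]

lemma G_rec {q : ℝ} (hq0 : 0 < q) (hq1 : q < 1) (μ x : ℝ) (m b : ℕ) :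
    G q μ x (m+1) b
      = (1 - μ*x*q^b) * G q μ x m (b+1) + μ*(q^b - q^m) * G q μ x m b := by
  have key : G q μ x (m+1) b
      = (∑ i ∈ Finset.range (m+1),
          q^i * qb q m i * (μ * q^b)^i * qPoch q x i * qPoch q μ (m + 1 - i))
        + (μ*q^b) * G q μ x m b - (μ*x*q^b) * G q μ x m (b+1) := by
    rw [G, Finset.sum_range_succ']
    have h2 : ∀ j ∈ Finset.range (m+1),
        qb q (m+1) (j+1) * (μ * q^b)^(j+1) * qPoch q x (j+1) * qPoch q μ (m+1-(j+1))
        = (q^(j+1) * qb q m (j+1) * (μ * q^b)^(j+1) * qPoch q x (j+1) * qPoch q μ (m+1-(j+1)))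
          + ((μ*q^b) * (qb q m j * (μ * q^b)^j * qPoch q x j * qPoch q μ (m - j))
             - (μ*x*q^b) * (qb q m j * (μ * q^(b+1))^j * qPoch q x j * qPoch q μ (m - j))) := by
      intro j hj
      rw [qb_pascal hq0 hq1 m j, qPoch_succ q x j,
          show m+1-(j+1) = m - j from by omega]
      have hp : (μ * q^(b+1))^j = (μ * q^b)^j * q^j := by
        rw [show μ * q^(b+1) = μ * q^b * q from by ring, mul_pow, mul_pow]
      rw [hp]; ring
    rw [Finset.sum_congr rfl h2, Finset.sum_add_distrib, Finset.sum_sub_distrib,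
        ← Finset.mul_sum, ← Finset.mul_sum]
    have h3 : ∑ j ∈ Finset.range (m+1),
        q^(j+1) * qb q m (j+1) * (μ * q^b)^(j+1) * qPoch q x (j+1) * qPoch q μ (m+1-(j+1))
        = (∑ i ∈ Finset.range (m+1),
            q^i * qb q m i * (μ * q^b)^i * qPoch q x i * qPoch q μ (m + 1 - i))
          - qPoch q μ (m+1) := by
      have h4 : ∑ i ∈ Finset.range (m+2),
          q^i * qb q m i * (μ * q^b)^i * qPoch q x i * qPoch q μ (m + 1 - i)
          = (∑ j ∈ Finset.range (m+1),
              q^(j+1) * qb q m (j+1) * (μ * q^b)^(j+1) * qPoch q x (j+1) * qPoch q μ (m+1-(j+1)))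
            + qPoch q μ (m+1) := by
      -- sum_range_succ' peels the 0 term
        rw [Finset.sum_range_succ']
        simp [qb_zero hq0 hq1, qPoch_zero]
      have h5 : ∑ i ∈ Finset.range (m+2),
          q^i * qb q m i * (μ * q^b)^i * qPoch q x i * qPoch q μ (m + 1 - i)
          = ∑ i ∈ Finset.range (m+1),
            q^i * qb q m i * (μ * q^b)^i * qPoch q x i * qPoch q μ (m + 1 - i) := by
        rw [Finset.sum_range_succ, qb_gt (show m < m+1 by omega)]
        ring
      rw [← h5, h4]; ring
    rw [h3]
    simp only [pow_zero, Nat.sub_zero, one_mul, mul_one, qb_zero hq0 hq1, qPoch_zero, G]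
    ring
  rw [key]
  have h6 : ∀ i ∈ Finset.range (m+1),
      q^i * qb q m i * (μ * q^b)^i * qPoch q x i * qPoch q μ (m + 1 - i)
      = (qb q m i * (μ * q^(b+1))^i * qPoch q x i * qPoch q μ (m - i))
        - (μ * q^m) * (qb q m i * (μ * q^b)^i * qPoch q x i * qPoch q μ (m - i)) := by
    intro i hi
    have him : i ≤ m := by simpa [Nat.lt_succ_iff] using hi
    rw [show m + 1 - i = (m - i) + 1 from by omega, qPoch_succ]
    have hp : (μ * q^(b+1))^i = (μ * q^b)^i * q^i := by
      rw [show μ * q^(b+1) = μ * q^b * q from by ring, mul_pow, mul_pow]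
    have hqm : q^(m-i) * q^i = q^m := by
      rw [← pow_add, show m - i + i = m from by omega]
    rw [hp]
    linear_combination (-(qb q m i * (μ*q^b)^i * qPoch q x i * qPoch q μ (m-i)) * μ) * hqm
  rw [Finset.sum_congr rfl h6, Finset.sum_sub_distrib, ← Finset.mul_sum, ← G, ← G]
  ring

section
variable {q : ℝ} (hq0 : 0 < q) (hq1 : q < 1) (μ x : ℝ)
include hq0 hq1

lemma G_rec3 (m : ℕ) : ∀ b : ℕ, G q μ x (m+1) b
    = (1 - μ*x*q^(b+m)) * G q μ x m b + μ*q^m*(q^b - 1) * G q μ x m (b-1) := by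
  induction m with
  | zero =>
    intro b
    rw [G_rec hq0 hq1, G_zero, G_zero, G_zero]
    ring
  | succ m IH =>
    intro b
    rcases b with _ | c
    · have E1 := G_rec hq0 hq1 μ x (m+1) 0
      have E2 := IH 1
      have E3 := IH 0
      have E4 := G_rec hq0 hq1 μ x m 0
      simp only [Nat.zero_sub] at *
      linear_combination E1 + (1 - μ*x) * E2 + μ*(1-q^(m+1)) * E3 - (1 - μ*x*q^(m+1)) * E4
    · have E1 := G_rec hq0 hq1 μ x (m+1) (c+1)
      have E2 := IH (c+2)
      have E3 := IH (c+1)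
      have E4 := G_rec hq0 hq1 μ x m c
      have E5 := G_rec hq0 hq1 μ x m (c+1)
      simp only [Nat.add_sub_cancel, Nat.succ_sub_one] at *
      linear_combination E1 + (1 - μ*x*q^(c+1)) * E2 + μ*(q^(c+1)-q^(m+1)) * E3
        - (μ*q^(m+1)*(q^(c+1)-1)) * E4 - (1 - μ*x*q^(m+c+2)) * E5

lemma G_nu (m : ℕ) : G q μ x m 0 = qPoch q (μ*x) m := by
  induction m with
  | zero => rw [G_zero, qPoch_zero]
  | succ m IH =>
    have h := G_rec3 hq0 hq1 μ x m 0
    rw [qPoch_succ, ← IH]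
    linear_combination h

lemma G_sym (b : ℕ) : ∀ m : ℕ,
    G q μ x m b * qPoch q (μ*x) b = G q μ x b m * qPoch q (μ*x) m := by
  induction b with
  | zero =>
    intro m
    rw [qPoch_zero, G_zero, G_nu hq0 hq1]
    ring
  | succ b IH =>
    intro m
    rcases m with _ | k
    · rw [G_zero, qPoch_zero, G_nu hq0 hq1]
      ring
    · rw [qPoch_succ q (μ*x) b]
      have E1 := G_rec hq0 hq1 μ x (k+1) b
      have E2 := G_rec hq0 hq1 μ x b (k+1)
      have I1 := IH (k+2)
      have I2 := IH (k+1)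
      have hP := qPoch_succ q (μ*x) (k+1)
      linear_combination (-(qPoch q (μ*x) b)) * E1 + I1 - (μ*(q^b - q^(k+1))) * I2
        - (qPoch q (μ*x) (k+1)) * E2 + (G q μ x b (k+2)) * hP
end

/-- The swap-kernel summation identity from the proof of Theorem 3.7:
`∑_{x'=x_{n+1}+1}^{x_n} φ_{q,ν_{n+1}/ν_n,ν_{n+1}}(x'-x_{n+1}-1 | x_n-x_{n+1}-1)
   q^{a(x_{n+1}+n+1)+b(x'+n)}
 = ∑_{r=0}^{b} φ_{q,ν_{n+1}/ν_n,ν_{n+1}}(r|b) q^{(a+b-r)(x_{n+1}+n+1)+r(x_n+n)}`. -/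
theorem qHahn_swap_duality_sum (q νn νn1 : ℝ) (hq0 : 0 < q) (hq1 : q < 1)
    (hν0 : 0 < νn1) (hord : νn1 < νn) (hν1 : νn < 1)
    (n : ℕ) (a b : ℕ) (xn xn1 : ℤ) (hx : xn1 < xn) :
    ∑ x' ∈ Finset.Icc (xn1 + 1) xn,
        qHahnPhi q (νn1 / νn) νn1 (x' - xn1 - 1).toNat (xn - xn1 - 1).toNat *
          q ^ ((a : ℤ) * (xn1 + (n : ℤ) + 1) + (b : ℤ) * (x' + (n : ℤ))) =
      ∑ r ∈ Finset.range (b + 1),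
        qHahnPhi q (νn1 / νn) νn1 r b *
          q ^ (((a : ℤ) + (b : ℤ) - (r : ℤ)) * (xn1 + (n : ℤ) + 1) +
            (r : ℤ) * (xn + (n : ℤ))) := by
  have hqne : q ≠ 0 := ne_of_gt hq0
  have hνn0 : 0 < νn := lt_trans hν0 hord
  set μ : ℝ := νn1 / νn with hμdef
  have hμ0 : 0 < μ := div_pos hν0 hνn0
  have hμ1 : μ < 1 := (div_lt_one hνn0).2 hord
  have hμx : μ * νn = νn1 := by rw [hμdef]; field_simp
  have hxval : νn1 / μ = νn := by
    rw [hμdef]; field_simp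
  set m : ℕ := (xn - xn1 - 1).toNat with hmdef
  have hm : (m : ℤ) = xn - xn1 - 1 := Int.toNat_of_nonneg (by omega)
  set C : ℝ := q ^ (((a:ℤ) + (b:ℤ)) * (xn1 + (n:ℤ) + 1)) with hC
  have hCne : C ≠ 0 := zpow_ne_zero _ hqne
  -- nonvanishing pochhammers
  have hqq : ∀ k, qPoch q q k ≠ 0 := fun k => (qPoch_pos hq0 hq1 hq0.le hq1 k).ne'
  have hνP : ∀ k, qPoch q νn1 k ≠ 0 :=
    fun k => (qPoch_pos hq0 hq1 hν0.le (lt_trans hord hν1) k).ne'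
  -- generic sum-to-G conversion
  have key : ∀ (M B : ℕ), (∑ j ∈ Finset.range (M+1), qHahnPhi q μ νn1 j M * (q^B)^j)
      = G q μ νn M B / qPoch q νn1 M := by
    intro M B
    rw [G, Finset.sum_div]
    refine Finset.sum_congr rfl fun j hj => ?_
    have hjm : j ≤ M := by simpa [Nat.lt_succ_iff] using hj
    rw [qHahnPhi, hxval, qb, if_pos hjm, mul_pow]
    field_simp
  -- symmetry in division form
  have hsym : G q μ νn m b / qPoch q νn1 m = G q μ νn b m / qPoch q νn1 b := by
    rw [div_eq_div_iff (hνP m) (hνP b)]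
    have := G_sym hq0 hq1 μ νn b m
    rw [hμx] at this
    linarith [this]
  -- reindex the Icc sum
  have hmap : Finset.Icc (xn1+1) xn
      = Finset.map ⟨fun j : ℕ => xn1+1+(j:ℤ), by have hinj : Function.Injective (fun j : ℕ => xn1+1+(j:ℤ)) := (fun u v h => by simpa using h); exact hinj⟩
          (Finset.range (m+1)) := by
    ext t
    simp only [Finset.mem_Icc, Finset.mem_map, Finset.mem_range, Function.Embedding.coeFn_mk]
    constructor
    · intro ht
      exact ⟨(t - xn1 - 1).toNat, by omega, by omega⟩
    · rintro ⟨j, hj, rfl⟩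
      omega
  rw [hmap, Finset.sum_map]
  simp only [Function.Embedding.coeFn_mk]
  have hL : ∀ j ∈ Finset.range (m+1),
      qHahnPhi q μ νn1 ((xn1+1+(j:ℤ) - xn1 - 1).toNat) m
          * q ^ ((a:ℤ) * (xn1 + (n:ℤ) + 1) + (b:ℤ) * ((xn1+1+(j:ℤ)) + (n:ℤ)))
      = C * (qHahnPhi q μ νn1 j m * (q^b)^j) := by
    intro j hj
    have h1 : (xn1+1+(j:ℤ) - xn1 - 1).toNat = j := by omega
    have h2 : (a:ℤ) * (xn1 + (n:ℤ) + 1) + (b:ℤ) * ((xn1+1+(j:ℤ)) + (n:ℤ))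
        = ((a:ℤ) + (b:ℤ)) * (xn1 + (n:ℤ) + 1) + ((b*j : ℕ) : ℤ) := by
      push_cast; ring
    rw [h1, h2, zpow_add₀ hqne, zpow_natCast, pow_mul, ← hC]
    ring
  have hR : ∀ r ∈ Finset.range (b+1),
      qHahnPhi q μ νn1 r b
          * q ^ (((a:ℤ) + (b:ℤ) - (r:ℤ)) * (xn1 + (n:ℤ) + 1) + (r:ℤ) * (xn + (n:ℤ)))
      = C * (qHahnPhi q μ νn1 r b * (q^m)^r) := by
    intro r hr
    have h2 : ((a:ℤ) + (b:ℤ) - (r:ℤ)) * (xn1 + (n:ℤ) + 1) + (r:ℤ) * (xn + (n:ℤ))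
        = ((a:ℤ) + (b:ℤ)) * (xn1 + (n:ℤ) + 1) + ((r*m : ℕ) : ℤ) := by
      push_cast
      linear_combination (-(r:ℤ)) * hm
    rw [h2, zpow_add₀ hqne, zpow_natCast, pow_mul, ← hC]
    ring
  rw [Finset.sum_congr rfl hL, Finset.sum_congr rfl hR, ← Finset.mul_sum, ← Finset.mul_sum]
  congr 1
  rw [key m b, key b m, hsym]
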